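/- (Deterministic form of Theorem 2.2: consistency of GAIC(2 + δ_N).) Let (δ_N) be a sequence of positive reals with δ_N → 0 and N^{2/3}·δ_N → ∞ as N → ∞. Assume in addition that there is a constant C such that |N^{2/3}(ℓ_i(N) − 2σ)| ≤ C for all N and all k < i ≤ q. Then there exists N₀ such that for all N ≥ N₀, every (2 + δ_N)-minimizer j* at N satisfies j* = k. -/

import Mathlib

open Filter

set_option maxHeartbeats 1000000

/-- For `σ > 0`, `ψ_σ(x) = x + σ²/x`. -/
noncomputable def psi (σ x : ℝ) : ℝ := x + σ ^ 2 / x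

/-- The score `GAIC^γ_j(N) = (N/(2σ²)) Σ_{i=j+1}^{q} ℓ_i(N)² + γ(Nj − j(j−1)/2)`. -/
noncomputable def GAIC (σ : ℝ) (q : ℕ) (ℓ : ℕ → ℕ → ℝ) (γ : ℝ) (j N : ℕ) : ℝ :=
  ((N : ℝ) / (2 * σ ^ 2)) * ∑ i ∈ Finset.Icc (j + 1) q, (ℓ i N) ^ 2
    + γ * ((N : ℝ) * (j : ℝ) - (j : ℝ) * ((j : ℝ) - 1) / 2)

lemma gaic_diff (σ : ℝ) (q : ℕ) (ℓ : ℕ → ℕ → ℝ) (γ : ℝ) (j N : ℕ) (hj : j < q) :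
    GAIC σ q ℓ γ j N - GAIC σ q ℓ γ (j+1) N
      = ((N : ℝ) / (2 * σ ^ 2)) * (ℓ (j+1) N) ^ 2 - γ * ((N : ℝ) - j) := by
  have hins : Finset.Icc (j + 1) q = insert (j+1) (Finset.Icc (j + 2) q) := by
    ext x; simp only [Finset.mem_Icc, Finset.mem_insert]; omega
  have hnot : (j+1) ∉ Finset.Icc (j+2) q := by simp
  simp only [GAIC, hins, Finset.sum_insert hnot]
  push_cast
  ring

lemma lt_of_chain_down (f : ℕ → ℝ) (k : ℕ) (h : ∀ j, j < k → f (j+1) < f j) :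
    ∀ j, j < k → f k < f j := by
  have key : ∀ d j, j + d = k → 0 < d → f k < f j := by
    intro d
    induction d with
    | zero => intro j hj hd; omega
    | succ d ih =>
      intro j hj hd
      have hstep : f (j+1) < f j := h j (by omega)
      rcases Nat.eq_zero_or_pos d with h0 | h0
      · subst h0; have : j + 1 = k := by omega
        rw [← this]; exact hstep
      · have := ih (j+1) (by omega) h0
        linarith
  intro j hj
  exact key (k - j) j (by omega) (by omega)

lemma lt_of_chain_up (f : ℕ → ℝ) (k q : ℕ) (h : ∀ j, k ≤ j → j < q → f j < f (j+1)) :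
    ∀ j, k < j → j ≤ q → f k < f j := by
  intro j
  induction j with
  | zero => omega
  | succ j ih =>
    intro hkj hjq
    rcases Nat.lt_or_ge k j with h1 | h1
    · have h2 := ih h1 (by omega)
      have h3 := h j (by omega) (by omega)
      linarith
    · have hkj' : k = j := by omega
      subst hkj'
      exact h k le_rfl (by omega)

theorem gaic_shrinking_penalty_consistency
    (σ : ℝ) (hσ : 0 < σ) (q k : ℕ) (hq : 1 ≤ q) (hkq : k ≤ q)
    (lam : ℕ → ℝ)
    (hlam_anti : ∀ i j : ℕ, 1 ≤ i → i ≤ j → j ≤ k → lam j ≤ lam i)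
    (hlam_gt : ∀ i : ℕ, 1 ≤ i → i ≤ k → σ < lam i)
    (ℓ : ℕ → ℕ → ℝ)
    (hℓ_anti : ∀ N i j : ℕ, 1 ≤ i → i ≤ j → j ≤ q → ℓ j N ≤ ℓ i N)
    (hspike : ∀ i : ℕ, 1 ≤ i → i ≤ k →
      Tendsto (fun N : ℕ => ℓ i N) atTop (nhds (psi σ (lam i))))
    (hbulk : ∀ i : ℕ, k < i → i ≤ q →
      Tendsto (fun N : ℕ => ℓ i N) atTop (nhds (2 * σ)))
    (δ : ℕ → ℝ) (hδpos : ∀ N : ℕ, 0 < δ N)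
    (hδ0 : Tendsto δ atTop (nhds 0))
    (hδtop : Tendsto (fun N : ℕ => (N : ℝ) ^ ((2 : ℝ) / 3) * δ N) atTop atTop)
    (C : ℝ)
    (hC : ∀ N i : ℕ, k < i → i ≤ q → |(N : ℝ) ^ ((2 : ℝ) / 3) * (ℓ i N - 2 * σ)| ≤ C) :
    ∃ N₀ : ℕ, ∀ N ≥ N₀, ∀ jstar : ℕ, jstar ≤ q →
      (∀ j : ℕ, j ≤ q → GAIC σ q ℓ (2 + δ N) jstar N ≤ GAIC σ q ℓ (2 + δ N) j N) →
      jstar = k := by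
  have h2σ2 : (0:ℝ) < 2 * σ ^ 2 := by positivity
  -- Part A: for j < k, eventually GAIC (j+1) < GAIC j
  have hA : ∀ j, j < k → ∀ᶠ N in atTop,
      GAIC σ q ℓ (2 + δ N) (j+1) N < GAIC σ q ℓ (2 + δ N) j N := by
    intro j hjk
    have hjq : j < q := lt_of_lt_of_le hjk hkq
    set x := lam (j+1) with hx
    have hσx : σ < x := hlam_gt (j+1) (by omega) (by omega)
    have hx0 : (0:ℝ) < x := hσ.trans hσx
    have h2σlt : 2 * σ < psi σ x := by
      have heq : psi σ x - 2*σ = (x - σ)^2 / x := by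
        simp only [psi]; field_simp; ring
      have hpos : 0 < (x - σ)^2 / x :=
        div_pos (pow_pos (by linarith) 2) hx0
      linarith
    have hL2 : 4 * σ^2 < (psi σ x)^2 := by nlinarith [hσ]
    have hγ : Tendsto (fun N : ℕ => 2 + δ N) atTop (nhds 2) := by
      have := (tendsto_const_nhds : Tendsto (fun _ : ℕ => (2:ℝ)) atTop (nhds 2)).add hδ0
      simpa using this
    have hjN : Tendsto (fun N : ℕ => 1 - (j:ℝ)/N) atTop (nhds 1) := by
      have := (tendsto_const_nhds : Tendsto (fun _ : ℕ => (1:ℝ)) atTop (nhds 1)).sub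
        (tendsto_const_div_atTop_nhds_zero_nat (j:ℝ))
      simpa using this
    have hRHS : Tendsto (fun N : ℕ => 2*σ^2*(2 + δ N)*(1 - (j:ℝ)/N)) atTop
        (nhds (4*σ^2)) := by
      have h := (hγ.const_mul (2*σ^2)).mul hjN
      have : 2*σ^2*2*1 = 4*σ^2 := by ring
      rw [this] at h
      simpa [mul_assoc] using h
    have hℓ2 : Tendsto (fun N : ℕ => (ℓ (j+1) N)^2) atTop (nhds ((psi σ x)^2)) :=
      (hspike (j+1) (by omega) (by omega)).pow 2
    have hev := hRHS.eventually_lt hℓ2 hL2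
    filter_upwards [hev, eventually_ge_atTop 1] with N h1 hN1
    have hN0 : (0:ℝ) < (N:ℝ) := by exact_mod_cast hN1
    have key : ((N:ℝ)/(2*σ^2)) * (2*σ^2*(2 + δ N)*(1 - (j:ℝ)/N))
        = (2 + δ N)*((N:ℝ) - j) := by
      field_simp
    have h2 := mul_lt_mul_of_pos_left h1 (show (0:ℝ) < (N:ℝ)/(2*σ^2) by positivity)
    rw [key] at h2
    have hdiff := gaic_diff σ q ℓ (2 + δ N) j N hjq
    linarith
  -- Part B: for k ≤ j < q, eventually GAIC j < GAIC (j+1)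
  have hB : ∀ j, k ≤ j → j < q → ∀ᶠ N in atTop,
      GAIC σ q ℓ (2 + δ N) j N < GAIC σ q ℓ (2 + δ N) (j+1) N := by
    intro j hkj hjq
    have hC0 : 0 ≤ C := le_trans (abs_nonneg _) (hC 1 (j+1) (by omega) (by omega))
    set K := (4*σ*C + C^2 + 1)/(2*σ^2) with hK
    have e1 : ∀ᶠ N : ℕ in atTop, δ N < 1 := hδ0.eventually_lt_const (by norm_num)
    have e2 : ∀ᶠ N : ℕ in atTop, K < (N:ℝ) ^ ((2:ℝ)/3) * δ N := hδtop.eventually_gt_atTop K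
    have e3 : ∀ᶠ N : ℕ in atTop, 6*σ^2*(q:ℝ) < (N:ℝ) ^ ((1:ℝ)/3) := by
      have ht : Tendsto (fun N : ℕ => (N:ℝ) ^ ((1:ℝ)/3)) atTop atTop :=
        (tendsto_rpow_atTop (by norm_num : (0:ℝ) < 1/3)).comp
          tendsto_natCast_atTop_atTop
      exact ht.eventually_gt_atTop _
    filter_upwards [e1, e2, e3, eventually_ge_atTop 1] with N hδ1 hKN ht hN1
    have hN0 : (0:ℝ) < (N:ℝ) := by exact_mod_cast hN1
    set t := (N:ℝ) ^ ((1:ℝ)/3) with htdef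
    set u := (N:ℝ) ^ ((2:ℝ)/3) with hudef
    have ht0 : 0 < t := Real.rpow_pos_of_pos hN0 _
    have hu0 : 0 < u := Real.rpow_pos_of_pos hN0 _
    have htu : t * u = (N:ℝ) := by
      rw [htdef, hudef, ← Real.rpow_add hN0]
      norm_num
    have hu1 : 1 ≤ u := Real.one_le_rpow (by exact_mod_cast hN1) (by norm_num)
    set ε := ℓ (j+1) N - 2*σ with hε
    have hεu : |u * ε| ≤ C := hC N (j+1) (by omega) (by omega)
    have hεu1 : u * ε ≤ C := (abs_le.mp hεu).2
    have hεu2 : -C ≤ u * ε := (abs_le.mp hεu).1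
    have hsq : (u*ε)^2 ≤ C^2 := by nlinarith [hεu1, hεu2]
    -- key bounds
    have h1 : (N:ℝ)*(4*σ*ε) ≤ 4*σ*C*t := by
      have : (N:ℝ)*(4*σ*ε) = 4*σ*(t*(u*ε)) := by rw [← htu]; ring
      rw [this]
      have : t*(u*ε) ≤ t*C := mul_le_mul_of_nonneg_left hεu1 ht0.le
      nlinarith [hσ]
    have h2a : u*ε^2 ≤ C^2 := by
      nlinarith [hsq, mul_nonneg (mul_nonneg (sub_nonneg.mpr hu1) hu0.le) (sq_nonneg ε)]
    have h2 : (N:ℝ)*ε^2 ≤ C^2*t := by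
      have : (N:ℝ)*ε^2 = t*(u*ε^2) := by rw [← htu]; ring
      rw [this, mul_comm (C^2) t]
      exact mul_le_mul_of_nonneg_left h2a ht0.le
    have hjq' : (j:ℝ) ≤ (q:ℝ) := by exact_mod_cast hjq.le
    have h3 : 2*σ^2*((2 + δ N)*(j:ℝ)) ≤ 6*σ^2*(q:ℝ) := by
      have h3a : (2 + δ N)*(j:ℝ) ≤ 3*(q:ℝ) := by
        nlinarith [mul_nonneg (by linarith : (0:ℝ) ≤ 1 - δ N) (Nat.cast_nonneg (α := ℝ) j),
          (hδpos N).le, Nat.cast_nonneg (α := ℝ) j]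
      nlinarith [h2σ2]
    have h4 : (4*σ*C + C^2 + 1) * t ≤ 2*σ^2*(δ N * (N:ℝ)) := by
      have hKval : 2*σ^2*K = 4*σ*C + C^2 + 1 := by
        rw [hK]; field_simp
      have : δ N * (N:ℝ) = t*(u*δ N) := by rw [← htu]; ring
      rw [this, ← hKval]
      have : t*K ≤ t*(u*δ N) := mul_le_mul_of_nonneg_left hKN.le ht0.le
      nlinarith [h2σ2]
    have hℓval : ℓ (j+1) N = 2*σ + ε := by rw [hε]; ring
    have hmain : (N:ℝ)*(ℓ (j+1) N)^2 < 2*σ^2*((2 + δ N)*((N:ℝ) - j)) := by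
      rw [hℓval]
      nlinarith [h1, h2, h3, h4, ht]
    have hdiv : ((N:ℝ)/(2*σ^2))*(ℓ (j+1) N)^2 < (2 + δ N)*((N:ℝ) - j) := by
      rw [div_mul_eq_mul_div, div_lt_iff₀ h2σ2]
      nlinarith [hmain]
    have hdiff := gaic_diff σ q ℓ (2 + δ N) j N hjq
    linarith
  -- combine
  have hall1 : ∀ᶠ N in atTop, ∀ j ∈ Set.Iio k,
      GAIC σ q ℓ (2 + δ N) (j+1) N < GAIC σ q ℓ (2 + δ N) j N :=
    (eventually_all_finite (Set.finite_Iio k)).mpr (fun j hj => hA j hj)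
  have hall2 : ∀ᶠ N in atTop, ∀ j ∈ Set.Ico k q,
      GAIC σ q ℓ (2 + δ N) j N < GAIC σ q ℓ (2 + δ N) (j+1) N :=
    (eventually_all_finite (Set.finite_Ico k q)).mpr (fun j hj => hB j hj.1 hj.2)
  obtain ⟨N₀, hN₀⟩ := eventually_atTop.mp (hall1.and hall2)
  refine ⟨N₀, fun N hN jstar hjstarq hmin => ?_⟩
  obtain ⟨hc1, hc2⟩ := hN₀ N hN
  by_contra hne
  rcases Nat.lt_or_ge jstar k with hlt | hge
  · have hdown := lt_of_chain_down (fun j => GAIC σ q ℓ (2 + δ N) j N) k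
      (fun j hj => hc1 j hj) jstar hlt
    have := hmin k hkq
    linarith
  · have hgt : k < jstar := lt_of_le_of_ne hge (Ne.symm hne)
    have hup := lt_of_chain_up (fun j => GAIC σ q ℓ (2 + δ N) j N) k q
      (fun j h1 h2 => hc2 j ⟨h1, h2⟩) jstar hgt hjstarq
    have := hmin k hkq
    linarith
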